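/- Let m_G, m_S, M, k be natural numbers with m = m_G + m_S, M ≤ m, and k ≤ min(M, m_S), let ε ∈ [0,1] be real, and let a, b, c ≥ 0 be real parameters. Let (Ω, μ) be a probability space, B ⊆ Ω a measurable event, and X : Ω → ℕ a measurable random variable whose law is hypergeometric: for every natural number i, μ({ω : X ω = i}) = (C(m_S, i) · C(m − m_S, M − i)) / C(m, M) (with C(n, r) = 0 when r > n). Assume that for every i with i < k one has μ(B ∩ {ω : X ω = i}) ≤ (a·e^{−b·i} + c) · μ({ω : X ω = i}), and for every i with k ≤ i one has μ(B ∩ {ω : X ω = i}) ≤ ε · μ({ω : X ω = i}). Then μ(Bᶜ) ≥ ∑_{i=0}^{k−1} (1 − (a·e^{−b·i} + c)) · (C(m_S, i) · C(m − m_S, M − i)) / C(m, M) + (1 − ε) · ∑_{i=k}^{min(M, m_S)} (C(m_S, i) · C(m − m_S, M − i)) / C(m, M). -/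

import Mathlib

open MeasureTheory Finset

theorem swap_certificate_tighter_lower_bound
    (m_G m_S M k m : ℕ) (hm : m = m_G + m_S) (hM : M ≤ m) (hk : k ≤ min M m_S)
    (ε : ℝ) (hε0 : 0 ≤ ε) (hε1 : ε ≤ 1)
    (a b c : ℝ) (ha : 0 ≤ a) (hb : 0 ≤ b) (hc : 0 ≤ c)
    {Ω : Type*} [MeasurableSpace Ω] (μ : Measure Ω) [IsProbabilityMeasure μ]
    (B : Set Ω) (hB : MeasurableSet B)
    (X : Ω → ℕ) (hX : Measurable X)
    (hlaw : ∀ i : ℕ, (μ {ω | X ω = i}).toReal =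
      (Nat.choose m_S i * Nat.choose (m - m_S) (M - i) : ℝ) / Nat.choose m M)
    (hsub : ∀ i : ℕ, i < k →
      (μ (B ∩ {ω | X ω = i})).toReal
        ≤ (a * Real.exp (-b * i) + c) * (μ {ω | X ω = i}).toReal)
    (hcond : ∀ i : ℕ, k ≤ i →
      (μ (B ∩ {ω | X ω = i})).toReal ≤ ε * (μ {ω | X ω = i}).toReal) :
    (∑ i ∈ Finset.range k, (1 - (a * Real.exp (-b * i) + c)) *
        ((Nat.choose m_S i * Nat.choose (m - m_S) (M - i) : ℝ) / Nat.choose m M))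
      + (1 - ε) * ∑ i ∈ Finset.Icc k (min M m_S),
        (Nat.choose m_S i * Nat.choose (m - m_S) (M - i) : ℝ) / Nat.choose m M
      ≤ (μ Bᶜ).toReal := by
  set N := min M m_S with hN
  set q : ℕ → ℝ := fun i => (μ (Bᶜ ∩ {ω | X ω = i})).toReal with hq
  have hXi : ∀ i : ℕ, MeasurableSet {ω | X ω = i} := fun i =>
    hX (measurableSet_singleton i)
  -- decomposition of measure
  have hdecomp : ∀ i : ℕ, q i = (μ {ω | X ω = i}).toReal - (μ (B ∩ {ω | X ω = i})).toReal := by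
    intro i
    have h := measure_inter_add_diff (μ := μ) {ω | X ω = i} hB
    have hdiff : {ω | X ω = i} \ B = Bᶜ ∩ {ω | X ω = i} := by
      ext ω; simp [Set.mem_diff, and_comm]
    rw [hdiff] at h
    have h1 : μ ({ω | X ω = i} ∩ B) ≠ ⊤ := measure_ne_top μ _
    have h2 : μ (Bᶜ ∩ {ω | X ω = i}) ≠ ⊤ := measure_ne_top μ _
    have := congrArg ENNReal.toReal h
    rw [ENNReal.toReal_add h1 h2] at this
    rw [hq]
    simp only
    rw [Set.inter_comm B]
    linarith
  -- sum bound
  have hsum : ∑ i ∈ Finset.range (N + 1), q i ≤ (μ Bᶜ).toReal := by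
    have hdisj : ((Finset.range (N + 1) : Finset ℕ) : Set ℕ).PairwiseDisjoint
        (fun i => Bᶜ ∩ {ω | X ω = i}) := by
      intro i _ j _ hij
      refine Set.disjoint_left.mpr ?_
      rintro ω ⟨-, h1⟩ ⟨-, h2⟩
      exact hij (h1.symm.trans h2)
    have hmeas : ∀ i ∈ Finset.range (N + 1), MeasurableSet (Bᶜ ∩ {ω | X ω = i}) :=
      fun i _ => hB.compl.inter (hXi i)
    have hunion := measure_biUnion_finset (μ := μ) hdisj hmeas
    have hle : μ (⋃ i ∈ Finset.range (N + 1), (Bᶜ ∩ {ω | X ω = i})) ≤ μ Bᶜ := by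
      apply measure_mono
      intro ω hω
      simp only [Set.mem_iUnion] at hω
      obtain ⟨i, _, hi, _⟩ := hω
      exact hi
    rw [hunion] at hle
    have h3 := ENNReal.toReal_mono (measure_ne_top μ _) hle
    rw [ENNReal.toReal_sum (fun i _ => measure_ne_top μ _)] at h3
    simpa [q] using h3
  -- split the sum
  have hsplit : ∑ i ∈ Finset.range k, q i + ∑ i ∈ Finset.Icc k N, q i
      = ∑ i ∈ Finset.range (N + 1), q i := by
    rw [Finset.range_eq_Ico, Finset.range_eq_Ico, ← Finset.Ico_add_one_right_eq_Icc]
    exact Finset.sum_Ico_consecutive q (Nat.zero_le k) (hk.trans (Nat.le_succ N))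
  have hp0 : ∀ i : ℕ, (0:ℝ) ≤ (μ {ω | X ω = i}).toReal := fun i => ENNReal.toReal_nonneg
  -- termwise bounds
  have h1 : ∑ i ∈ Finset.range k, (1 - (a * Real.exp (-b * i) + c)) *
      ((Nat.choose m_S i * Nat.choose (m - m_S) (M - i) : ℝ) / Nat.choose m M)
      ≤ ∑ i ∈ Finset.range k, q i := by
    apply Finset.sum_le_sum
    intro i hi
    rw [← hlaw i, hdecomp i]
    have := hsub i (Finset.mem_range.mp hi)
    nlinarith [hp0 i]
  have h2 : (1 - ε) * ∑ i ∈ Finset.Icc k N,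
      (Nat.choose m_S i * Nat.choose (m - m_S) (M - i) : ℝ) / Nat.choose m M
      ≤ ∑ i ∈ Finset.Icc k N, q i := by
    rw [Finset.mul_sum]
    apply Finset.sum_le_sum
    intro i hi
    rw [← hlaw i, hdecomp i]
    have := hcond i (Finset.mem_Icc.mp hi).1
    nlinarith [hp0 i]
  calc _ ≤ ∑ i ∈ Finset.range k, q i + ∑ i ∈ Finset.Icc k N, q i := add_le_add h1 h2
    _ = ∑ i ∈ Finset.range (N + 1), q i := hsplit
    _ ≤ (μ Bᶜ).toReal := hsum
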